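/- Define K(h,b) = (h + b^2)(1 - h)/R̄(b) with R̄(b) = (1/4)(1 + |b|/2)^4 for |b| ≤ 2 and R̄(b) = b^2 for |b| ≥ 2. Then the maximum over h ∈ [0, 1/2] of inf_{b ∈ R} K(h, b) is attained at h* = -22 + 10√5, with corresponding critical b* = -4 + 2√5, and b* = -4 + 2√5 is the unique root in [-4 + 2√5, 1/2] of the appropriate stationarity condition h = b - b^2/2 combined with ∂K/∂b = 0. -/

import Mathlib

/-- `R̄(b)`: squared minimal Chebyshev deviation for the quadratic case. -/
noncomputable def Rbar (b : ℝ) : ℝ := if |b| ≤ 2 then (1/4)*(1 + |b|/2)^4 else b^2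

/-- `K(h,b) = (h + b²)(1 - h)/R̄(b)`. -/
noncomputable def Kfun (h b : ℝ) : ℝ := (h + b^2) * (1 - h) / Rbar b

lemma s_sq : Real.sqrt 5 ^ 2 = 5 := Real.sq_sqrt (by norm_num)
lemma s_gt : (2.2:ℝ) < Real.sqrt 5 := by nlinarith [s_sq, Real.sqrt_nonneg 5]
lemma s_lt : Real.sqrt 5 < 2.25 := by nlinarith [s_sq, Real.sqrt_nonneg 5]

lemma Rbar_pos (b : ℝ) : 0 < Rbar b := by
  unfold Rbar
  split_ifs with h
  · positivity
  · push_neg at h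
    nlinarith [abs_nonneg b, sq_abs b]

lemma Kfun_nonneg {h : ℝ} (h0 : 0 ≤ h) (h1 : h ≤ 1/2) (b : ℝ) : 0 ≤ Kfun h b := by
  unfold Kfun
  apply div_nonneg _ (Rbar_pos b).le
  nlinarith [sq_nonneg b]

lemma key_ineq (b : ℝ) : Rbar b ≤ (-22 + 10 * Real.sqrt 5) + b^2 := by
  have hs := s_sq
  have hg := s_gt
  have hl := s_lt
  set s := Real.sqrt 5 with hsdef
  unfold Rbar
  split_ifs with h
  · set t := |b| with htdef
    have ht0 : 0 ≤ t := abs_nonneg b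
    have ht2 : t ≤ 2 := h
    have htb : t^2 = b^2 := sq_abs b
    have hquad : t^2/4 + s*t + 1 - 4*s ≤ 0 := by
      nlinarith [mul_nonneg (sub_nonneg.2 ht2) (by linarith : (0:ℝ) ≤ s),
        mul_nonneg ht0 (sub_nonneg.2 ht2)]
    have key : (t+4-2*s)^2 * (t^2/4 + s*t + 1 - 4*s) ≤ 0 :=
      mul_nonpos_of_nonneg_of_nonpos (sq_nonneg _) hquad
    have hid : (-22 + 10*s) + t^2 - (1/4)*(1 + t/2)^4
        = -(1/16) * ((t+4-2*s)^2 * (t^2/4 + s*t + 1 - 4*s)) := by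
      linear_combination ((-3/16)*t^2 + 17/4 + (1/4)*t*s - s) * hs
    nlinarith [key, hid, htb]
  · nlinarith

lemma Kfun_lb (b : ℝ) : 23 - 10 * Real.sqrt 5 ≤ Kfun (-22 + 10 * Real.sqrt 5) b := by
  have hs := s_sq; have hg := s_gt; have hl := s_lt
  have hR := Rbar_pos b
  have hk := key_ineq b
  unfold Kfun
  rw [le_div_iff₀ hR]
  nlinarith [hk, hR]

lemma Rbar_bstar : Rbar (-4 + 2 * Real.sqrt 5) = 14 - 6 * Real.sqrt 5 := by
  have hs := s_sq; have hg := s_gt; have hl := s_lt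
  unfold Rbar
  rw [abs_of_nonneg (by nlinarith : (0:ℝ) ≤ -4 + 2 * Real.sqrt 5), if_pos (by nlinarith)]
  linear_combination (1/4*(Real.sqrt 5^2 - 4*Real.sqrt 5 + 11)) * hs

lemma Kfun_deriv_zero : deriv (fun y => Kfun (-22 + 10 * Real.sqrt 5) y) (-4 + 2 * Real.sqrt 5) = 0 := by
  have hs := s_sq; have hg := s_gt; have hl := s_lt
  set s := Real.sqrt 5 with hsdef
  set h : ℝ := -22 + 10 * s with hhdef
  set b : ℝ := -4 + 2 * s with hbdef
  have hb0 : (0:ℝ) < b := by rw [hbdef]; nlinarith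
  have hb2 : b < 2 := by rw [hbdef]; nlinarith
  have heq : (fun y => Kfun h y) =ᶠ[nhds b]
      (fun y => (h + y^2) * (1 - h) / ((1/4)*(1 + y/2)^4)) := by
    filter_upwards [Ioo_mem_nhds hb0 hb2] with y hy
    unfold Kfun Rbar
    rw [abs_of_pos hy.1, if_pos hy.2.le]
  have hne : (1/4)*(1 + b/2)^4 ≠ 0 := by
    have : (0:ℝ) < 1 + b/2 := by nlinarith
    positivity
  have hu : HasDerivAt (fun y : ℝ => (h + y^2) * (1 - h)) ((2:ℕ) * b^1 * (1 - h)) b :=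
    ((hasDerivAt_pow 2 b).const_add h).mul_const (1 - h)
  have hv : HasDerivAt (fun y : ℝ => (1/4)*(1 + y/2)^4)
      ((1/4) * ((4:ℕ) * (1 + b/2)^3 * (1/2))) b := by
    have h1 : HasDerivAt (fun y : ℝ => 1 + y/2) (1/2) b := by
      simpa using ((hasDerivAt_id b).div_const 2).const_add 1
    exact (h1.pow 4).const_mul (1/4)
  have hd : HasDerivAt (fun y : ℝ => (h + y^2) * (1 - h) / ((1/4)*(1 + y/2)^4)) _ b := hu.div hv hne
  rw [heq.deriv_eq, hd.deriv, div_eq_zero_iff]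
  left
  push_cast
  rw [hhdef, hbdef]
  linear_combination (23 - 79*s + 99*s^2 - 53*s^3 + 10*s^4) * hs

lemma stat_eq : (-22 + 10 * Real.sqrt 5)
    = (-4 + 2 * Real.sqrt 5) - (-4 + 2 * Real.sqrt 5)^2/2 := by
  linear_combination 2 * s_sq

/-- The maximum over `h ∈ [0,1/2]` of `inf_{b ∈ ℝ} K(h,b)` is
attained at `h* = -22 + 10√5`, with critical point `b* = -4 + 2√5`, and `b*` is
the unique point in `[-4+2√5, 1/2]` satisfying the stationarity condition
`h* = b - b²/2` together with `∂K/∂b (h*, b) = 0`. -/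
theorem maximin_quadratic_unbounded :
    ((-22 + 10 * Real.sqrt 5) ∈ Set.Icc (0:ℝ) (1/2)) ∧
    (∀ h ∈ Set.Icc (0:ℝ) (1/2),
      sInf (Set.range (fun b => Kfun h b)) ≤
        sInf (Set.range (fun b => Kfun (-22 + 10 * Real.sqrt 5) b))) ∧
    (∃! b : ℝ, b ∈ Set.Icc (-4 + 2 * Real.sqrt 5) (1/2) ∧
      (-22 + 10 * Real.sqrt 5) = b - b^2/2 ∧
      deriv (fun y => Kfun (-22 + 10 * Real.sqrt 5) y) b = 0) ∧
    ((-4 + 2 * Real.sqrt 5) ∈ Set.Icc (-4 + 2 * Real.sqrt 5) (1/2) ∧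
      (-22 + 10 * Real.sqrt 5) = (-4 + 2 * Real.sqrt 5) - (-4 + 2 * Real.sqrt 5)^2/2 ∧
      deriv (fun y => Kfun (-22 + 10 * Real.sqrt 5) y) (-4 + 2 * Real.sqrt 5) = 0) := by
  have hs := s_sq; have hg := s_gt; have hl := s_lt
  set s := Real.sqrt 5 with hsdef
  refine ⟨⟨by nlinarith, by nlinarith⟩, ?_, ?_, ?_, stat_eq, Kfun_deriv_zero⟩
  · -- the maximin inequality
    intro h hh
    have hlow : 23 - 10*s ≤ sInf (Set.range (fun b => Kfun (-22 + 10*s) b)) := by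
      refine le_csInf ⟨Kfun (-22 + 10*s) 0, ⟨0, rfl⟩⟩ ?_
      rintro x ⟨b, rfl⟩
      exact Kfun_lb b
    have hbdd : BddBelow (Set.range (fun b => Kfun h b)) := by
      refine ⟨0, ?_⟩
      rintro x ⟨b, rfl⟩
      exact Kfun_nonneg hh.1 hh.2 b
    suffices hex : ∃ b0 : ℝ, Kfun h b0 ≤ 23 - 10*s by
      obtain ⟨b0, hb0⟩ := hex
      calc sInf (Set.range (fun b => Kfun h b)) ≤ Kfun h b0 := csInf_le hbdd ⟨b0, rfl⟩
        _ ≤ 23 - 10*s := hb0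
        _ ≤ _ := hlow
    by_cases hc : h ≤ -22 + 10*s
    · refine ⟨-4 + 2*s, ?_⟩
      unfold Kfun
      rw [Rbar_bstar, div_le_iff₀ (by nlinarith : (0:ℝ) < 14 - 6*s)]
      have hfac : (0:ℝ) ≤ ((-22 + 10*s) - h) * (6*s - 13 - h) := by
        apply mul_nonneg (by linarith)
        nlinarith
      have hid : (23 - 10*s)*(14 - 6*s) - (h + (-4 + 2*s)^2)*(1 - h)
          = ((-22 + 10*s) - h)*(6*s - 13 - h) + (4*h - 4)*(s^2 - 5) := by ring
      rw [hs] at hid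
      linarith [hid, hfac]
    · push_neg at hc
      have hd : (0:ℝ) < h - (-22 + 10*s) := by linarith
      set x : ℝ := (1 - h) * h / (h - (-22 + 10*s)) with hxdef
      have hx0 : 0 < x := by
        apply div_pos _ hd
        nlinarith [hh.1, hh.2]
      have hxeq : (h - (-22 + 10*s)) * x = (1 - h) * h := by
        rw [hxdef, mul_div_cancel₀ _ hd.ne']
      refine ⟨2 + x, ?_⟩
      unfold Kfun Rbar
      rw [abs_of_nonneg (by linarith), if_neg (by push_neg; linarith)]
      rw [div_le_iff₀ (by nlinarith : (0:ℝ) < (2 + x)^2)]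
      nlinarith [mul_nonneg hd.le hx0.le, mul_nonneg hd.le (sq_nonneg x), hxeq]
  · -- unique critical point
    refine ⟨-4 + 2*s, ⟨⟨le_refl _, by nlinarith⟩, stat_eq, Kfun_deriv_zero⟩, ?_⟩
    rintro b ⟨⟨hb1, hb2⟩, hst, -⟩
    have hfac : (b - (-4 + 2*s)) * ((6 - b - 2*s)/2) = 0 := by
      linear_combination stat_eq - hst
    rcases mul_eq_zero.mp hfac with h1 | h1
    · linarith [sub_eq_zero.mp h1]
    · exfalso; nlinarith
  · exact ⟨le_refl _, by nlinarith⟩
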